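/- arXiv:2301.06868 — 4 statements merged into one kernel-verified Lean document; each statement's English description precedes it below -/
import Mathlib

section
/- If a d-dimensional configuration c : ℤ^d → A (A ⊆ ℤ finite) has a non-zero annihilator f with complex coefficients, then it also has an annihilator f' with integer coefficients satisfying Supp(f') = Supp(f). -/
open scoped BigOperators

/-- A cell of the `d`-dimensional grid `ℤ^d`. -/
abbrev Cell (d : ℕ) := Fin d → ℤ

/-- A `d`-dimensional configuration with integer symbols. -/
abbrev Config (d : ℕ) := Cell d → ℤ

/-- Laurent polynomials in `d` variables with complex coefficients,
modelled as the monoid algebra of `ℤ^d` over `ℂ`. -/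
abbrev LP (d : ℕ) := AddMonoidAlgebra ℂ (Cell d)

/-- The real (Euclidean) vector corresponding to an integer lattice vector. -/
noncomputable def toR {d : ℕ} (v : Cell d) : EuclideanSpace ℝ (Fin d) :=
  WithLp.toLp 2 (fun i => (v i : ℝ))

/-- The formal product `f·c` of a Laurent polynomial and a configuration:
`(fc)_u = Σ_{v ∈ Supp(f)} f_v c_{u-v}`. -/
noncomputable def conv {d : ℕ} (f : LP d) (c : Config d) : Cell d → ℂ :=
  fun u => ∑ v ∈ f.coeff.support, f.coeff v * (c (u - v) : ℂ)

/-- `f` annihilates `c`: the formal product `f·c` is the zero power series. -/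
def Annihilates {d : ℕ} (f : LP d) (c : Config d) : Prop :=
  ∀ u, conv f c u = 0

/-- `t` is a vector of periodicity of `e`. -/
def IsPeriodOf {d : ℕ} {α : Type*} (e : Cell d → α) (t : Cell d) : Prop :=
  t ≠ 0 ∧ ∀ u, e (u + t) = e u

/-- `e` is strongly periodic: it has `d` vectors of periodicity that are
linearly independent over `ℝ`. -/
def StronglyPeriodic {d : ℕ} {α : Type*} (e : Cell d → α) : Prop :=
  ∃ T : Fin d → Cell d, (∀ i, IsPeriodOf e (T i)) ∧
    LinearIndependent ℝ (fun i => (fun j => ((T i j : ℤ) : ℝ)))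

/-- `f` periodizes `c`: the formal product `f·c` is strongly periodic,
i.e. `f ∈ Per(c)`. -/
def Periodizes {d : ℕ} (f : LP d) (c : Config d) : Prop :=
  StronglyPeriodic (conv f c)

/-- The translation of a configuration by `t`. -/
def shift {d : ℕ} (t : Cell d) (c : Config d) : Config d := fun u => c (u + t)

/-- A subshift: a set of configurations closed in the prodiscrete topology
and closed under translations. -/
def IsSubshift {d : ℕ} (X : Set (Config d)) : Prop :=
  IsClosed X ∧ ∀ c ∈ X, ∀ t : Cell d, shift t c ∈ X

/-- All configurations of `X` use symbols from one finite alphabet `A ⊆ ℤ`. -/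
def FiniteAlphabet {d : ℕ} (X : Set (Config d)) : Prop :=
  ∃ A : Finset ℤ, ∀ c ∈ X, ∀ u, c u ∈ A

/-- `f ∈ Ann(X)`: `f` annihilates every configuration of `X`. -/
def AnnX {d : ℕ} (f : LP d) (X : Set (Config d)) : Prop :=
  ∀ c ∈ X, Annihilates f c

/-- `f ∈ Per(X)`: `f` periodizes every configuration of `X`. -/
def PerX {d : ℕ} (f : LP d) (X : Set (Config d)) : Prop :=
  ∀ c ∈ X, Periodizes f c

/-- The difference binomial `x^t - 1`. -/
noncomputable def binom {d : ℕ} (t : Cell d) : LP d :=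
  AddMonoidAlgebra.single t 1 - AddMonoidAlgebra.single 0 1

/-- `X` is deterministic in the direction of `u`: the contents of a
configuration on the open discrete half space `H_u = {x ∈ ℤ^d : ⟨x,u⟩ < 0}`
determine the configuration completely. -/
def Deterministic {d : ℕ} (X : Set (Config d)) (u : EuclideanSpace ℝ (Fin d)) : Prop :=
  ∀ c ∈ X, ∀ c' ∈ X, (∀ x : Cell d, (inner ℝ (toR x) u : ℝ) < 0 → c x = c' x) → c = c'

/-- The `(d-1)`-dimensional subspace `S = ⟨u⟩^⊥` is expansive for `X`: `X` is
deterministic in the directions of both `u` and `-u`. -/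
def ExpansiveSpace {d : ℕ} (X : Set (Config d))
    (S : Submodule ℝ (EuclideanSpace ℝ (Fin d))) : Prop :=
  ∃ u : EuclideanSpace ℝ (Fin d), u ≠ 0 ∧ S = (Submodule.span ℝ {u})ᗮ ∧
    Deterministic X u ∧ Deterministic X (-u)

/-- Vectors `a` and `b` of `ℤ^d` are parallel. -/
def IsParallel {d : ℕ} (a b : Cell d) : Prop :=
  ∃ p q : ℤ, p ≠ 0 ∧ q ≠ 0 ∧ p • a = q • b

/-- A family of lattice vectors is pairwise linearly independent (over `ℝ`). -/
def PairwiseLinIndep {d m : ℕ} (t : Fin m → Cell d) : Prop :=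
  ∀ i j, i ≠ j → LinearIndependent ℝ ![toR (t i), toR (t j)]

/-- The set of `D`-patterns appearing in the configuration `c`. -/
def PattSetC {d : ℕ} (c : Config d) (D : Finset (Cell d)) : Set (D → ℤ) :=
  {p | ∃ t : Cell d, ∀ v : D, p v = c (t + v)}

/-- The set of `D`-patterns appearing in configurations of `X`. -/
def PattSet {d : ℕ} (X : Set (Config d)) (D : Finset (Cell d)) : Set (D → ℤ) :=
  {p | ∃ c ∈ X, ∃ t : Cell d, ∀ v : D, p v = c (t + v)}

/-- `c` is a tiling of `ℤ^d` by translations of the tile `D`: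
`c` is binary and every cell is covered exactly once, i.e.
`Σ_{v ∈ D} c_{u-v} = 1` for every `u`. -/
def IsTiling {d : ℕ} (D : Finset (Cell d)) (c : Config d) : Prop :=
  (∀ u, c u = 0 ∨ c u = 1) ∧ ∀ u : Cell d, ∑ v ∈ D, c (u - v) = 1

/-- The set `T_D` of all tilings of `ℤ^d` by translations of `D`. -/
def TilingSet {d : ℕ} (D : Finset (Cell d)) : Set (Config d) :=
  {c | IsTiling D c}

/-- The characteristic Laurent polynomial `f_D = Σ_{v ∈ D} x^v` of a finite shape. -/
noncomputable def charPoly {d : ℕ} (D : Finset (Cell d)) : LP d :=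
  ∑ v ∈ D, AddMonoidAlgebra.single v 1

/-- The radius-`r` Lee sphere `B_r^d = {v ∈ ℤ^d : |v 1| + ⋯ + |v d| ≤ r}`. -/
noncomputable def LeeSphere (d : ℕ) (r : ℤ) : Finset (Cell d) :=
  (Fintype.piFinset fun _ : Fin d => Finset.Icc (-r) r).filter fun v => ∑ i, |v i| ≤ r


/-- Auxiliary: a single rational solution nonzero at a given support point. -/
lemma stmt0_aux_key1 {d : ℕ} (c : Config d) (f : LP d) (hann : Annihilates f c)
    (v0 : {v : Cell d // v ∈ f.coeff.support}) :
    ∃ x : {v : Cell d // v ∈ f.coeff.support} → ℚ,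
      (∀ u, ∑ v : {v : Cell d // v ∈ f.coeff.support}, (c (u - v.1) : ℚ) * x v = 0) ∧
      x v0 ≠ 0 := by
  classical
  set ru : Cell d → ({v : Cell d // v ∈ f.coeff.support} → ℚ) :=
    fun u v => (c (u - v.1) : ℚ) with hru
  have hconv : ∀ u : Cell d,
      ∑ v : {v : Cell d // v ∈ f.coeff.support}, (c (u - v.1) : ℂ) * f.coeff v.1 = 0 := by
    intro u
    have h1 : ∑ v : {v : Cell d // v ∈ f.coeff.support}, (c (u - v.1) : ℂ) * f.coeff v.1
        = ∑ v ∈ f.coeff.support, (c (u - v) : ℂ) * f.coeff v := by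
      rw [Finset.univ_eq_attach]
      exact Finset.sum_attach f.coeff.support (fun w => (c (u - w) : ℂ) * f.coeff w)
    have h2 := hann u
    simp only [conv] at h2
    rw [h1, ← h2]
    exact Finset.sum_congr rfl fun v _ => mul_comm _ _
  set e : {v : Cell d // v ∈ f.coeff.support} → ℚ := fun j => if v0 = j then 1 else 0 with he
  by_cases h : e ∈ Submodule.span ℚ (Set.range ru)
  · exfalso
    obtain ⟨l, hl⟩ := Finsupp.mem_span_range_iff_exists_finsupp.mp h
    have hfv0 : f.coeff v0.1 ≠ 0 := Finsupp.mem_support_iff.mp v0.2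
    apply hfv0
    have h2 : ∀ v : {v : Cell d // v ∈ f.coeff.support},
        (e v : ℂ) = ∑ u ∈ l.support, (l u : ℂ) * (c (u - v.1) : ℂ) := by
      intro v
      have h3 : e v = ∑ u ∈ l.support, l u * ru u v := by
        rw [← hl, Finsupp.sum, Finset.sum_apply]
        simp [smul_eq_mul]
      rw [h3]
      push_cast
      exact Finset.sum_congr rfl fun u _ => by rw [hru]; push_cast; ring
    have h4 : (f.coeff v0.1 : ℂ) = ∑ v : {v : Cell d // v ∈ f.coeff.support}, (e v : ℂ) * f.coeff v.1 := by
      rw [show ∑ v : {v : Cell d // v ∈ f.coeff.support}, (e v : ℂ) * f.coeff v.1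
          = ∑ v : {v : Cell d // v ∈ f.coeff.support}, (if v0 = v then f.coeff v.1 else 0) from
        Finset.sum_congr rfl fun v _ => by rw [he]; split <;> simp_all]
      rw [Finset.sum_ite_eq]
      simp
    rw [h4]
    calc ∑ v : {v : Cell d // v ∈ f.coeff.support}, (e v : ℂ) * f.coeff v.1
        = ∑ v : {v : Cell d // v ∈ f.coeff.support},
            (∑ u ∈ l.support, (l u : ℂ) * (c (u - v.1) : ℂ)) * f.coeff v.1 :=
          Finset.sum_congr rfl fun v _ => by rw [h2]
      _ = ∑ u ∈ l.support, (l u : ℂ)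
            * ∑ v : {v : Cell d // v ∈ f.coeff.support}, (c (u - v.1) : ℂ) * f.coeff v.1 := by
          simp_rw [Finset.sum_mul, Finset.mul_sum, mul_assoc]
          rw [Finset.sum_comm]
      _ = 0 := by simp only [hconv, mul_zero, Finset.sum_const_zero]
  · have hq : (Submodule.span ℚ (Set.range ru)).mkQ e ≠ 0 := by
      rw [Submodule.mkQ_apply, Ne, Submodule.Quotient.mk_eq_zero]; exact h
    obtain ⟨g, hg⟩ : ∃ g : Module.Dual ℚ
        (({v : Cell d // v ∈ f.coeff.support} → ℚ) ⧸ Submodule.span ℚ (Set.range ru)),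
        g ((Submodule.span ℚ (Set.range ru)).mkQ e) ≠ 0 := by
      by_contra hcon
      push_neg at hcon
      exact hq ((Module.forall_dual_apply_eq_zero_iff ℚ _).mp hcon)
    set G := g.comp (Submodule.span ℚ (Set.range ru)).mkQ with hG
    refine ⟨fun v => G (fun j => if v = j then 1 else 0), ?_, ?_⟩
    · intro u
      have hm : ru u ∈ Submodule.span ℚ (Set.range ru) :=
        Submodule.subset_span ⟨u, rfl⟩
      have hz : G (ru u) = 0 := by
        simp [hG, LinearMap.comp_apply, Submodule.mkQ_apply,
          (Submodule.Quotient.mk_eq_zero _).mpr hm]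
      rw [LinearMap.pi_apply_eq_sum_univ G (ru u)] at hz
      simpa [smul_eq_mul, hru] using hz
    · intro hcon
      apply hg
      show G e = 0
      rw [he]
      exact hcon

/-- If a `d`-dimensional configuration `c : ℤ^d → A` (`A ⊆ ℤ` finite)
has a non-zero annihilator `f` with complex coefficients, then it also has an
annihilator `f'` with integer coefficients satisfying `Supp(f') = Supp(f)`. -/
theorem stmt0 {d : ℕ} (c : Config d) (hfin : (Set.range c).Finite)
    (f : LP d) (hf : f ≠ 0) (hann : Annihilates f c) :
    ∃ f' : Cell d →₀ ℤ,
      f'.support = f.coeff.support ∧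
      Annihilates (AddMonoidAlgebra.ofCoeff (Finsupp.mapRange (fun n : ℤ => (n : ℂ)) (by simp) f') : LP d) c := by
  classical
  -- closure of the solution set under affine combinations
  have hPadd : ∀ x y : {v : Cell d // v ∈ f.coeff.support} → ℚ, ∀ q : ℚ,
      (∀ u, ∑ v : {v : Cell d // v ∈ f.coeff.support}, (c (u - v.1) : ℚ) * x v = 0) →
      (∀ u, ∑ v : {v : Cell d // v ∈ f.coeff.support}, (c (u - v.1) : ℚ) * y v = 0) →
      (∀ u, ∑ v : {v : Cell d // v ∈ f.coeff.support}, (c (u - v.1) : ℚ) * (x v + q * y v) = 0) := by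
    intro x y q hx hy u
    calc ∑ v : {v : Cell d // v ∈ f.coeff.support}, (c (u - v.1) : ℚ) * (x v + q * y v)
        = (∑ v : {v : Cell d // v ∈ f.coeff.support}, (c (u - v.1) : ℚ) * x v)
          + q * ∑ v : {v : Cell d // v ∈ f.coeff.support}, (c (u - v.1) : ℚ) * y v := by
          rw [Finset.mul_sum, ← Finset.sum_add_distrib]
          exact Finset.sum_congr rfl fun v _ => by ring
      _ = 0 := by rw [hx u, hy u]; ring
  -- a rational solution nonzero on any finite set of coordinates
  have key2 : ∀ T : Finset {v : Cell d // v ∈ f.coeff.support},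
      ∃ x : {v : Cell d // v ∈ f.coeff.support} → ℚ,
      (∀ u, ∑ v : {v : Cell d // v ∈ f.coeff.support}, (c (u - v.1) : ℚ) * x v = 0) ∧
      ∀ v ∈ T, x v ≠ 0 := by
    intro T
    induction T using Finset.induction with
    | empty => exact ⟨0, fun u => by simp, by simp⟩
    | @insert v0 T hvT ih =>
      obtain ⟨x, hx, hxT⟩ := ih
      obtain ⟨y, hy, hy0⟩ := stmt0_aux_key1 c f hann v0
      set B : Finset ℚ := (insert v0 T).image fun v => -(x v) / (y v) with hB
      obtain ⟨q, hq⟩ := Infinite.exists_notMem_finset B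
      refine ⟨fun v => x v + q * y v, hPadd x y q hx hy, ?_⟩
      intro v hv
      by_cases hyv : y v = 0
      · have hvT' : v ∈ T := by
          rcases Finset.mem_insert.mp hv with h | h
          · exact absurd (h ▸ hyv) hy0
          · exact h
        simpa [hyv] using hxT v hvT'
      · intro hzero
        have hzero' : x v + q * y v = 0 := hzero
        apply hq
        have hqv : q = -(x v) / (y v) := by
          rw [eq_div_iff hyv]; linarith
        rw [hB, hqv]
        exact Finset.mem_image_of_mem _ hv
  obtain ⟨x, hxsol, hxne'⟩ := key2 Finset.univ
  have hxne : ∀ v : {v : Cell d // v ∈ f.coeff.support}, x v ≠ 0 :=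
    fun v => hxne' v (Finset.mem_univ v)
  -- clear denominators
  set N : ℤ := ∏ v : {v : Cell d // v ∈ f.coeff.support}, ((x v).den : ℤ) with hN
  have hNpos : 0 < N := Finset.prod_pos fun v _ => by exact_mod_cast (x v).pos
  have hzex : ∀ v : {v : Cell d // v ∈ f.coeff.support}, ∃ z : ℤ, (z : ℚ) = N * x v := by
    intro v
    obtain ⟨k, hk⟩ := Finset.dvd_prod_of_mem
      (fun v : {v : Cell d // v ∈ f.coeff.support} => ((x v).den : ℤ)) (Finset.mem_univ v)
    refine ⟨k * (x v).num, ?_⟩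
    have hd : ((x v).den : ℚ) ≠ 0 := by exact_mod_cast (x v).den_nz
    have hnum : ((x v).num : ℚ) = x v * (x v).den := by
      have := (div_eq_iff hd).mp (Rat.num_div_den (x v))
      linarith
    rw [hN, hk]
    push_cast
    rw [hnum]
    ring
  choose z hzval using hzex
  have hzne : ∀ v : {v : Cell d // v ∈ f.coeff.support}, z v ≠ 0 := by
    intro v hv0
    have h5 := hzval v
    rw [hv0] at h5
    simp only [Int.cast_zero] at h5
    have hN0 : (N : ℚ) ≠ 0 := by exact_mod_cast hNpos.ne'
    rcases mul_eq_zero.mp h5.symm with h | h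
    · exact hN0 h
    · exact hxne v h
  set f' : Cell d →₀ ℤ := Finsupp.onFinset f.coeff.support
    (fun u => if h : u ∈ f.coeff.support then z ⟨u, h⟩ else 0)
    (fun u hu => by by_contra hmem; simp [hmem] at hu) with hf'
  have hval : ∀ u (h : u ∈ f.coeff.support), f' u = z ⟨u, h⟩ := fun u h => by
    rw [hf', Finsupp.onFinset_apply, dif_pos h]
  have hval0 : ∀ u, u ∉ f.coeff.support → f' u = 0 := fun u h => by
    rw [hf', Finsupp.onFinset_apply, dif_neg h]
  have hsupp : f'.support = f.coeff.support := by
    ext u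
    rw [Finsupp.mem_support_iff]
    constructor
    · intro hu
      by_contra hmem
      exact hu (hval0 u hmem)
    · intro hu
      rw [hval u hu]
      exact hzne ⟨u, hu⟩
  refine ⟨f', hsupp, ?_⟩
  intro u
  show conv _ c u = 0
  simp only [conv, AddMonoidAlgebra.coeff_ofCoeff]
  rw [Finsupp.support_mapRange_of_injective (by simp) _ Int.cast_injective, hsupp]
  have hFv : ∀ v : {v : Cell d // v ∈ f.coeff.support},
      (Finsupp.mapRange (fun n : ℤ => (n : ℂ)) (by simp) f') v.1 = (z v : ℂ) := by
    intro v
    rw [Finsupp.mapRange_apply, hval v.1 v.2]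
  have h1 : ∑ v : {v : Cell d // v ∈ f.coeff.support}, (c (u - v.1) : ℚ) * (z v : ℚ) = 0 := by
    calc ∑ v : {v : Cell d // v ∈ f.coeff.support}, (c (u - v.1) : ℚ) * (z v : ℚ)
        = (N : ℚ) * ∑ v : {v : Cell d // v ∈ f.coeff.support}, (c (u - v.1) : ℚ) * x v := by
          rw [Finset.mul_sum]
          exact Finset.sum_congr rfl fun v _ => by rw [hzval v]; ring
      _ = 0 := by rw [hxsol u, mul_zero]
  have h2 : ∑ v : {v : Cell d // v ∈ f.coeff.support}, (c (u - v.1) : ℂ) * (z v : ℂ) = 0 := by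
    have h3 := congrArg (fun q : ℚ => (q : ℂ)) h1
    push_cast at h3
    exact h3
  have e1 : ∑ v ∈ f.coeff.support,
      (Finsupp.mapRange (fun n : ℤ => (n : ℂ)) (by simp) f') v * (c (u - v) : ℂ)
      = ∑ v : {v : Cell d // v ∈ f.coeff.support},
        (Finsupp.mapRange (fun n : ℤ => (n : ℂ)) (by simp) f') v.1 * (c (u - v.1) : ℂ) := by
    rw [Finset.univ_eq_attach]
    exact (Finset.sum_attach _ _).symm
  rw [e1]
  exact (Finset.sum_congr rfl fun v _ => by rw [hFv v]; ring).trans h2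
end

section
/- Let X be a d-dimensional subshift and let f ∈ Per(X) satisfy 0 ∈ Supp(f). Let u ∈ ℝ^d be a non-zero vector such that −Supp(f) \ {0} ⊆ H_u, where H_u = {x ∈ ℤ^d : ⟨x,u⟩ < 0}. Then X is deterministic in the direction of u. -/
open scoped BigOperators

section Aux

variable {d : ℕ}

/-- The inner product `⟨x, u⟩` written as an explicit sum. -/
noncomputable def ipf (u : EuclideanSpace ℝ (Fin d)) (x : Cell d) : ℝ :=
  ∑ i, (x i : ℝ) * u i

lemma ipf_inner (u : EuclideanSpace ℝ (Fin d)) (x : Cell d) :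
    (inner ℝ (toR x) u : ℝ) = ipf u x := by
  simp [toR, ipf, PiLp.inner_apply, RCLike.inner_apply, mul_comm]

lemma ipf_add (u : EuclideanSpace ℝ (Fin d)) (x y : Cell d) :
    ipf u (x + y) = ipf u x + ipf u y := by
  simp only [ipf, Pi.add_apply, Int.cast_add, add_mul, Finset.sum_add_distrib]

lemma ipf_neg (u : EuclideanSpace ℝ (Fin d)) (x : Cell d) :
    ipf u (-x) = - ipf u x := by
  simp [ipf, Finset.sum_neg_distrib]

lemma ipf_sub (u : EuclideanSpace ℝ (Fin d)) (x y : Cell d) :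
    ipf u (x - y) = ipf u x - ipf u y := by
  simp only [ipf, Pi.sub_apply, Int.cast_sub, sub_mul, Finset.sum_sub_distrib]

lemma ipf_zsmul (u : EuclideanSpace ℝ (Fin d)) (k : ℤ) (x : Cell d) :
    ipf u (k • x) = (k : ℝ) * ipf u x := by
  simp only [ipf, Pi.smul_apply, smul_eq_mul, Int.cast_mul, Finset.mul_sum, mul_assoc]

lemma ipf_nsmul (u : EuclideanSpace ℝ (Fin d)) (n : ℕ) (x : Cell d) :
    ipf u (n • x) = (n : ℝ) * ipf u x := by
  have : (n : ℤ) • x = n • x := by simp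
  rw [← this, ipf_zsmul]; norm_num

/-- The group of periodicity vectors (including `0`) of a function on the grid. -/
def periodGroup (g : Cell d → ℂ) : AddSubgroup (Cell d) where
  carrier := {t | ∀ x, g (x + t) = g x}
  zero_mem' := by intro x; simp
  add_mem' := by
    intro a b ha hb x
    rw [← add_assoc, hb, ha]
  neg_mem' := by
    intro a ha x
    have := ha (x + -a)
    simpa using this.symm

lemma mem_periodGroup {g : Cell d → ℂ} {t : Cell d} (h : t ∈ periodGroup g) :
    ∀ x, g (x + t) = g x := h

lemma det_ne_zero_of_li (T : Fin d → Cell d)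
    (h : LinearIndependent ℝ (fun i => (fun j => ((T i j : ℤ) : ℝ)))) :
    (Matrix.of T).det ≠ 0 := by
  set N : Matrix (Fin d) (Fin d) ℝ := Matrix.of fun i j => ((T i j : ℝ)) with hN
  have hNdet : N.det ≠ 0 := by
    intro h0
    obtain ⟨v, hv, hv0⟩ := Matrix.exists_vecMul_eq_zero_iff.mpr h0
    apply hv
    have hli := Fintype.linearIndependent_iff.mp h v ?_
    · funext i; exact hli i
    · funext j
      have := congrFun hv0 j
      simpa [Matrix.vecMul, dotProduct, hN, Finset.sum_apply, mul_comm] using this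
  intro h0
  apply hNdet
  have : N = (Matrix.of T).map (Int.castRingHom ℝ) := by
    funext i j; simp [hN]
  rw [this, ← RingHom.mapMatrix_apply, ← RingHom.map_det, h0]
  simp

lemma det_smul_mem_periodGroup (T : Fin d → Cell d) {g : Cell d → ℂ}
    (hT : ∀ i, T i ∈ periodGroup g) (w : Cell d) :
    (Matrix.of T).det • w ∈ periodGroup g := by
  have key : (Matrix.of T).det • w
      = ∑ i, (Matrix.vecMul w (Matrix.of T).adjugate) i • T i := by
    have h1 : Matrix.vecMul (Matrix.vecMul w (Matrix.of T).adjugate) (Matrix.of T)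
        = (Matrix.of T).det • w := by
      rw [Matrix.vecMul_vecMul, Matrix.adjugate_mul]
      funext j
      simp [Matrix.vecMul, dotProduct, Matrix.smul_apply, Matrix.one_apply,
        mul_ite, Finset.sum_ite_eq', mul_comm]
    funext j
    have := congrFun h1 j
    simpa [Matrix.vecMul, dotProduct, Finset.sum_apply, mul_comm] using this.symm
  rw [key]
  exact AddSubgroup.sum_mem _ fun i _ => AddSubgroup.zsmul_mem _ (hT i) _

end Aux

/-- If a subshift `X` has a periodizer `f` with `0 ∈ Supp(f)` and
`-Supp(f) \ {0} ⊆ H_u` for a non-zero `u ∈ ℝ^d`, then `X` is deterministic in the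
direction of `u`. -/
theorem stmt5 {d : ℕ} (X : Set (Config d)) (hX : IsSubshift X) (hA : FiniteAlphabet X)
    (f : LP d) (hf : PerX f X) (h0 : (0 : Cell d) ∈ f.coeff.support)
    (u : EuclideanSpace ℝ (Fin d)) (hu : u ≠ 0)
    (hH : ∀ v ∈ f.coeff.support, v ≠ 0 → (inner ℝ (toR (-v)) u : ℝ) < 0) :
    Deterministic X u := by
  intro c hc c' hc' hagree
  have hag : ∀ x : Cell d, ipf u x < 0 → c x = c' x := by
    intro x hx
    exact hagree x (by rw [ipf_inner]; exact hx)
  -- inner products of nonzero support vectors are positive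
  have hsupp' : ∀ v ∈ f.coeff.support, v ≠ 0 → 0 < ipf u v := by
    intro v hv hv0
    have h := hH v hv hv0
    rw [ipf_inner, ipf_neg] at h
    linarith
  have hsupp : ∀ v ∈ f.coeff.support, 0 ≤ ipf u v := by
    intro v hv
    rcases eq_or_ne v 0 with rfl | hv0
    · simp [ipf]
    · exact le_of_lt (hsupp' v hv hv0)
  -- the formal products agree on the half space
  have hhalf : ∀ y : Cell d, ipf u y < 0 → conv f c y = conv f c' y := by
    intro y hy
    unfold conv
    refine Finset.sum_congr rfl fun v hv => ?_
    have hlt : ipf u (y - v) < 0 := by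
      have := hsupp v hv
      rw [ipf_sub]; linarith
    rw [hag _ hlt]
  -- strongly periodic formal products
  obtain ⟨T, hT, hTli⟩ := hf c hc
  obtain ⟨T', hT', hT'li⟩ := hf c' hc'
  have hDne : (Matrix.of T).det ≠ 0 := det_ne_zero_of_li T hTli
  have hD'ne : (Matrix.of T').det ≠ 0 := det_ne_zero_of_li T' hT'li
  set D : ℤ := (Matrix.of T).det with hD
  set D' : ℤ := (Matrix.of T').det with hD'
  have hTper : ∀ i, T i ∈ periodGroup (conv f c) := fun i => (hT i).2
  have hT'per : ∀ i, T' i ∈ periodGroup (conv f c') := fun i => (hT' i).2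
  -- a coordinate where u is nonzero
  obtain ⟨i, hi⟩ : ∃ i, u i ≠ 0 := by
    by_contra h
    push_neg at h
    exact hu (by ext j; exact h j)
  -- choose a common period t with ipf u t < 0
  have hq : ((D * D' : ℤ) : ℝ) * u i ≠ 0 := by
    apply mul_ne_zero _ hi
    have h2 : D * D' ≠ 0 := mul_ne_zero hDne hD'ne
    simpa using h2
  set w1 : Cell d := (fun j => if j = i then 1 else 0) with hw1
  have hipw1 : ipf u w1 = u i := by
    simp [ipf, hw1, apply_ite, Finset.sum_ite_eq', mul_ite]
  obtain ⟨w, hw⟩ : ∃ w : Cell d, ((D * D' : ℤ) : ℝ) * ipf u w < 0 := by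
    rcases lt_or_gt_of_ne hq with h | h
    · exact ⟨w1, by rw [hipw1]; exact h⟩
    · exact ⟨-w1, by rw [ipf_neg, hipw1]; linarith⟩
  set t : Cell d := (D * D') • w with ht
  have htlt : ipf u t < 0 := by rw [ht, ipf_zsmul]; exact hw
  have htc : t ∈ periodGroup (conv f c) := by
    have : t = D • (D' • w) := by rw [ht, mul_smul]
    rw [this]
    exact det_smul_mem_periodGroup T hTper _
  have htc' : t ∈ periodGroup (conv f c') := by
    have : t = D' • (D • w) := by rw [ht, mul_comm, mul_smul]
    rw [this]
    exact det_smul_mem_periodGroup T' hT'per _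
  -- the formal products agree everywhere
  have hgzero : ∀ x : Cell d, conv f c x = conv f c' x := by
    intro x
    obtain ⟨n, hn⟩ : ∃ n : ℕ, ipf u x + (n : ℝ) * ipf u t < 0 := by
      obtain ⟨n, hn⟩ := exists_nat_gt (ipf u x / (-ipf u t))
      refine ⟨n, ?_⟩
      rw [div_lt_iff₀ (by linarith : (0:ℝ) < -ipf u t)] at hn
      nlinarith
    have hmemc : (n • t) ∈ periodGroup (conv f c) := AddSubgroup.nsmul_mem _ htc n
    have hmemc' : (n • t) ∈ periodGroup (conv f c') := AddSubgroup.nsmul_mem _ htc' n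
    have hxin : ipf u (x + n • t) < 0 := by
      rw [ipf_add, ipf_nsmul]; exact hn
    calc conv f c x = conv f c (x + n • t) := (mem_periodGroup hmemc x).symm
      _ = conv f c' (x + n • t) := hhalf _ hxin
      _ = conv f c' x := mem_periodGroup hmemc' x
  -- cancellation lemma at a single cell
  have hf0 : f.coeff 0 ≠ 0 := Finsupp.mem_support_iff.mp h0
  have cancel : ∀ x : Cell d,
      (∀ v ∈ f.coeff.support.erase 0, c (x - v) = c' (x - v)) → c x = c' x := by
    intro x hx
    have hsum := hgzero x
    unfold conv at hsum
    rw [← Finset.add_sum_erase _ _ h0, ← Finset.add_sum_erase _ _ h0] at hsum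
    have heq : ∑ v ∈ f.coeff.support.erase 0, f.coeff v * (c (x - v) : ℂ)
        = ∑ v ∈ f.coeff.support.erase 0, f.coeff v * ((c' (x - v) : ℤ) : ℂ) :=
      Finset.sum_congr rfl fun v hv => by rw [hx v hv]
    rw [heq] at hsum
    have h00 := add_right_cancel hsum
    have := mul_left_cancel₀ hf0 h00
    have : ((c (x - 0) : ℤ) : ℂ) = ((c' (x - 0) : ℤ) : ℂ) := this
    have := Int.cast_injective this
    simpa using this
  -- conclude by a near-infimum argument
  have key : ∀ x, c x = c' x := by
    by_contra hk
    push_neg at hk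
    obtain ⟨x0, hx0⟩ := hk
    set E : Set ℝ := ipf u '' {x | c x ≠ c' x} with hE
    have hEne : E.Nonempty := ⟨_, ⟨x0, hx0, rfl⟩⟩
    have hEbdd : BddBelow E := by
      refine ⟨0, ?_⟩
      rintro r ⟨x, hx, rfl⟩
      by_contra h
      push_neg at h
      exact hx (hag x h)
    rcases Finset.eq_empty_or_nonempty (f.coeff.support.erase 0) with hF | hF
    · refine hx0 (cancel x0 fun v hv => ?_)
      rw [hF] at hv
      exact absurd hv (Finset.notMem_empty v)
    · set ε := (f.coeff.support.erase 0).inf' hF (ipf u) with hε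
      have hεpos : 0 < ε := by
        rw [hε, Finset.lt_inf'_iff]
        intro v hv
        obtain ⟨hv0, hvs⟩ := Finset.mem_erase.mp hv
        exact hsupp' v hvs hv0
      obtain ⟨r, hrE, hr⟩ := exists_lt_of_csInf_lt hEne
        (by linarith : sInf E < sInf E + ε)
      obtain ⟨x, hxS, rfl⟩ := hrE
      refine hxS (cancel x fun v hv => ?_)
      have hvε : ε ≤ ipf u v := Finset.inf'_le _ hv
      have hlt : ipf u (x - v) < sInf E := by
        rw [ipf_sub]; linarith
      by_contra hne
      have hmem : ipf u (x - v) ∈ E := ⟨x - v, hne, rfl⟩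
      exact absurd (csInf_le hEbdd hmem) (not_le.mpr hlt)
  exact funext key
end

section
/- Let X be a d-dimensional subshift and u ∈ ℝ^d non-zero. If for all c, c' ∈ X the equality of restrictions c|_{H_u} = c'|_{H_u} implies c_0 = c'_0 (agreement at the origin), then X is deterministic in the direction of u, i.e., c|_{H_u} = c'|_{H_u} implies c = c'. -/
open scoped BigOperators

lemma toR_add' {d : ℕ} (a b : Cell d) : toR (a + b) = toR a + toR b := by
  ext i
  show ((a i + b i : ℤ) : ℝ) = (a i : ℝ) + (b i : ℝ)
  push_cast; ring

/-- If for all `c, c' ∈ X` agreement on the half space `H_u` implies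
agreement at the origin, then `X` is deterministic in the direction of `u`. -/
theorem stmt6 {d : ℕ} (X : Set (Config d)) (hX : IsSubshift X) (hA : FiniteAlphabet X)
    (u : EuclideanSpace ℝ (Fin d)) (hu : u ≠ 0)
    (h0 : ∀ c ∈ X, ∀ c' ∈ X,
      (∀ x : Cell d, (inner ℝ (toR x) u : ℝ) < 0 → c x = c' x) → c 0 = c' 0) :
    Deterministic X u := by
  intro c hc c' hc' hagree
  by_contra hne
  set E : Set ℝ := {s | ∃ y : Cell d, c y ≠ c' y ∧ (inner ℝ (toR y) u : ℝ) = s} with hE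
  have hEne : E.Nonempty := by
    have : ∃ y, c y ≠ c' y := by
      by_contra h
      push_neg at h
      exact hne (funext h)
    obtain ⟨y, hy⟩ := this
    exact ⟨_, y, hy, rfl⟩
  have hEbd : BddBelow E := by
    refine ⟨0, fun s hs => ?_⟩
    obtain ⟨y, hy, rfl⟩ := hs
    by_contra h
    exact hy (hagree y (not_le.mp h))
  set m := sInf E with hm
  have hbelow : ∀ z : Cell d, (inner ℝ (toR z) u : ℝ) < m → c z = c' z := by
    intro z hz
    by_contra h
    exact absurd (csInf_le hEbd ⟨z, h, rfl⟩) (not_le.mpr hz)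
  have hyn : ∀ n : ℕ, ∃ y : Cell d, c y ≠ c' y ∧
      (inner ℝ (toR y) u : ℝ) < m + 1 / (n + 1) := by
    intro n
    have hpos : (0 : ℝ) < 1 / (n + 1) := by positivity
    obtain ⟨s, hs, hslt⟩ := exists_lt_of_csInf_lt hEne (lt_add_of_pos_right m hpos)
    obtain ⟨y, hy, rfl⟩ := hs
    exact ⟨y, hy, hslt⟩
  choose y hy1 hy2 using hyn
  obtain ⟨A, hAfin⟩ := hA
  have hK : IsCompact (Set.pi Set.univ fun _ : Cell d => (A : Set ℤ)) :=
    isCompact_univ_pi fun _ => A.finite_toSet.isCompact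
  set cs : ℕ → Config d := fun n => shift (y n) c with hcs_def
  set cs' : ℕ → Config d := fun n => shift (y n) c' with hcs'_def
  have hcsX : ∀ n, cs n ∈ X := fun n => hX.2 c hc (y n)
  have hcs'X : ∀ n, cs' n ∈ X := fun n => hX.2 c' hc' (y n)
  have hcsK : ∀ n, cs n ∈ Set.pi Set.univ fun _ : Cell d => (A : Set ℤ) :=
    fun n v _ => hAfin _ (hcsX n) v
  obtain ⟨e, -, φ, hφ, hφt⟩ := hK.tendsto_subseq hcsK
  have hcs'K : ∀ n, cs' (φ n) ∈ Set.pi Set.univ fun _ : Cell d => (A : Set ℤ) :=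
    fun n v _ => hAfin _ (hcs'X (φ n)) v
  obtain ⟨e', -, ψ, hψ, hψt⟩ := hK.tendsto_subseq hcs'K
  set σ : ℕ → ℕ := φ ∘ ψ with hσ
  have hσmono : StrictMono σ := hφ.comp hψ
  have het : Filter.Tendsto (fun n => cs (σ n)) Filter.atTop (nhds e) :=
    hφt.comp hψ.tendsto_atTop
  have he't : Filter.Tendsto (fun n => cs' (σ n)) Filter.atTop (nhds e') := hψt
  -- pointwise eventual equality
  have hev : ∀ (f : ℕ → Config d) (g : Config d),
      Filter.Tendsto f Filter.atTop (nhds g) →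
      ∀ x, ∀ᶠ n in Filter.atTop, f n x = g x := by
    intro f g hf x
    have : Filter.Tendsto (fun n => f n x) Filter.atTop (nhds (g x)) :=
      (tendsto_pi_nhds.mp hf) x
    rw [nhds_discrete, Filter.tendsto_pure] at this
    exact this
  have heX : e ∈ X := hX.1.mem_of_tendsto het (Filter.Eventually.of_forall fun n => hcsX _)
  have he'X : e' ∈ X := hX.1.mem_of_tendsto he't (Filter.Eventually.of_forall fun n => hcs'X _)
  -- e and e' agree on the half space
  have hagree' : ∀ x : Cell d, (inner ℝ (toR x) u : ℝ) < 0 → e x = e' x := by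
    intro x hx
    have hsmall : ∀ᶠ n in Filter.atTop, (1 : ℝ) / (σ n + 1) < -(inner ℝ (toR x) u : ℝ) := by
      have h1 : Filter.Tendsto (fun n : ℕ => (1 : ℝ) / (σ n + 1)) Filter.atTop (nhds 0) := by
        apply Filter.Tendsto.comp tendsto_one_div_add_atTop_nhds_zero_nat
        exact hσmono.tendsto_atTop
      exact h1.eventually_lt_const (by linarith)
    have key : ∀ᶠ n in Filter.atTop, cs (σ n) x = cs' (σ n) x := by
      filter_upwards [hsmall] with n hn
      show c (x + y (σ n)) = c' (x + y (σ n))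
      apply hbelow
      rw [toR_add', inner_add_left]
      have := hy2 (σ n)
      linarith
    obtain ⟨n, h1, h2, h3⟩ := ((hev _ e het x).and ((hev _ e' he't x).and key)).exists
    rw [← h1, ← h2, h3]
  have h00 := h0 e heX e' he'X hagree'
  obtain ⟨n, h1, h2⟩ := ((hev _ e het 0).and (hev _ e' he't 0)).exists
  have : cs (σ n) 0 ≠ cs' (σ n) 0 := by
    show c (0 + y (σ n)) ≠ c' (0 + y (σ n))
    rw [zero_add]
    exact hy1 (σ n)
  rw [h1, h2] at this
  exact this h00
end

section
/- Let D = {(0,0,0), (1,0,0), (0,1,0), (0,0,1)} ⊆ ℤ^3 and let a ∈ {0,1}^{ℤ^2} be a tiling of ℤ^2 by the 2×2 square tile S = {(0,0),(0,1),(1,0),(1,1)}. Define c ∈ {0,1}^{ℤ^3} by c(x_1,x_2,x_3) = a(x_1+x_3, x_2+x_3). Then c is a tiling of ℤ^3 by D, c is (1,1,−1)-periodic, the slice (x_1,x_2) ↦ c(x_1,x_2,0) equals a, and if a is not strongly periodic then c is not strongly periodic. -/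
open scoped BigOperators

section Stmt15Aux

private lemma vec2_eta (w : Cell 2) : w = ![w 0, w 1] := by
  funext i; fin_cases i <;> rfl

private lemma sq_sum (a : Config 2)
    (ha : IsTiling ({![0,0], ![0,1], ![1,0], ![1,1]} : Finset (Cell 2)) a)
    (x y : ℤ) : a ![x, y] + (a ![x, y-1] + (a ![x-1, y] + a ![x-1, y-1])) = 1 := by
  have h := ha.2 ![x, y]
  rw [show ({![0,0], ![0,1], ![1,0], ![1,1]} : Finset (Cell 2)) =
      insert ![0,0] (insert ![0,1] (insert ![1,0] {![1,1]})) from rfl] at h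
  rw [Finset.sum_insert (by decide), Finset.sum_insert (by decide),
    Finset.sum_insert (by decide), Finset.sum_singleton] at h
  have e1 : (![x,y] - ![0,0] : Cell 2) = ![x, y] := by funext i; fin_cases i <;> simp
  have e2 : (![x,y] - ![0,1] : Cell 2) = ![x, y-1] := by funext i; fin_cases i <;> simp
  have e3 : (![x,y] - ![1,0] : Cell 2) = ![x-1, y] := by funext i; fin_cases i <;> simp
  have e4 : (![x,y] - ![1,1] : Cell 2) = ![x-1, y-1] := by funext i; fin_cases i <;> simp
  rw [e1, e2, e3, e4] at h
  exact h

/-- The projection `(x₁,x₂,x₃) ↦ (x₁+x₃, x₂+x₃)` as an `ℝ`-linear map. -/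
private noncomputable def projL : (Fin 3 → ℝ) →ₗ[ℝ] (Fin 2 → ℝ) where
  toFun v := ![v 0 + v 2, v 1 + v 2]
  map_add' u v := by funext i; fin_cases i <;> simp <;> ring
  map_smul' r v := by funext i; fin_cases i <;> simp <;> ring

private lemma projL_surj : Function.Surjective projL := by
  intro y
  refine ⟨![y 0, y 1, 0], ?_⟩
  funext i; fin_cases i <;> simp [projL]

end Stmt15Aux

/-- From a tiling `a` of `ℤ²` by the `2×2` square, the configuration
`c(x₁,x₂,x₃) = a(x₁+x₃, x₂+x₃)` is a `(1,1,-1)`-periodic tiling of `ℤ³` by the tetromino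
`D = {(0,0,0),(1,0,0),(0,1,0),(0,0,1)}` whose slice at `x₃ = 0` equals `a`, and if `a`
is not strongly periodic then neither is `c`. -/
theorem stmt15 (a : Config 2)
    (ha : IsTiling ({![0,0], ![0,1], ![1,0], ![1,1]} : Finset (Cell 2)) a)
    (c : Config 3) (hc : ∀ u : Cell 3, c u = a ![u 0 + u 2, u 1 + u 2]) :
    IsTiling ({![0,0,0], ![1,0,0], ![0,1,0], ![0,0,1]} : Finset (Cell 3)) c ∧
    IsPeriodOf c ![1,1,-1] ∧
    (∀ x1 x2 : ℤ, c ![x1, x2, 0] = a ![x1, x2]) ∧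
    (¬ StronglyPeriodic a → ¬ StronglyPeriodic c) := by
  have hbin : ∀ u : Cell 3, c u = 0 ∨ c u = 1 := by
    intro u; rw [hc u]; exact ha.1 _
  refine ⟨⟨hbin, ?_⟩, ⟨?_, ?_⟩, ?_, ?_⟩
  · -- tiling sum
    intro u
    rw [show ({![0,0,0], ![1,0,0], ![0,1,0], ![0,0,1]} : Finset (Cell 3)) =
        insert ![0,0,0] (insert ![1,0,0] (insert ![0,1,0] {![0,0,1]})) from rfl]
    rw [Finset.sum_insert (by decide), Finset.sum_insert (by decide),
      Finset.sum_insert (by decide), Finset.sum_singleton]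
    rw [hc, hc, hc, hc]
    have h := sq_sum a ha (u 0 + u 2) (u 1 + u 2)
    have e1 : a ![(u - (![0,0,0] : Cell 3)) 0 + (u - (![0,0,0] : Cell 3)) 2, (u - (![0,0,0] : Cell 3)) 1 + (u - (![0,0,0] : Cell 3)) 2]
        = a ![u 0 + u 2, u 1 + u 2] := by congr 1; funext i; fin_cases i <;> simp
    have e2 : a ![(u - (![1,0,0] : Cell 3)) 0 + (u - (![1,0,0] : Cell 3)) 2, (u - (![1,0,0] : Cell 3)) 1 + (u - (![1,0,0] : Cell 3)) 2]
        = a ![u 0 + u 2 - 1, u 1 + u 2] := by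
      congr 1; funext i; fin_cases i <;> simp <;> ring
    have e3 : a ![(u - (![0,1,0] : Cell 3)) 0 + (u - (![0,1,0] : Cell 3)) 2, (u - (![0,1,0] : Cell 3)) 1 + (u - (![0,1,0] : Cell 3)) 2]
        = a ![u 0 + u 2, u 1 + u 2 - 1] := by
      congr 1; funext i; fin_cases i <;> simp <;> ring
    have e4 : a ![(u - (![0,0,1] : Cell 3)) 0 + (u - (![0,0,1] : Cell 3)) 2, (u - (![0,0,1] : Cell 3)) 1 + (u - (![0,0,1] : Cell 3)) 2]
        = a ![u 0 + u 2 - 1, u 1 + u 2 - 1] := by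
      congr 1; funext i; fin_cases i <;> simp <;> ring
    rw [e1, e2, e3, e4]
    have := sq_sum a ha (u 0 + u 2) (u 1 + u 2)
    linarith [this]
  · -- period vector nonzero
    intro h
    have := congrFun h 0
    simp at this
  · -- periodicity
    intro u
    rw [hc, hc]
    congr 1
    funext i; fin_cases i <;> simp <;> ring
  · -- slice
    intro x1 x2
    rw [hc]
    congr 1
    funext i; fin_cases i <;> simp
  · -- strong periodicity transfer
    intro hna hsc
    apply hna
    obtain ⟨T, hT, hli⟩ := hsc
    -- projected candidate periods
    set W : Fin 3 → Cell 2 := fun i => ![T i 0 + T i 2, T i 1 + T i 2] with hW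
    have hper : ∀ i, ∀ w : Cell 2, a (w + W i) = a w := by
      intro i w
      have h1 := (hT i).2 ![w 0, w 1, 0]
      rw [hc, hc] at h1
      have l1 : a (w + W i) = a ![(![w 0, w 1, 0] + T i) 0 + (![w 0, w 1, 0] + T i) 2,
          (![w 0, w 1, 0] + T i) 1 + (![w 0, w 1, 0] + T i) 2] := by
        congr 1; funext k; fin_cases k <;> simp [hW] <;> ring
      have l2 : a w = a ![(![w 0, w 1, 0] : Cell 3) 0 + (![w 0, w 1, 0] : Cell 3) 2,
          (![w 0, w 1, 0] : Cell 3) 1 + (![w 0, w 1, 0] : Cell 3) 2] := by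
        congr 1; funext k; fin_cases k <;> simp
      rw [l1, l2, h1]
    -- real versions
    set VR : Fin 3 → (Fin 3 → ℝ) := fun i j => ((T i j : ℤ) : ℝ) with hVR
    have hWVR : ∀ i, projL (VR i) = (fun j => ((W i j : ℤ) : ℝ)) := by
      intro i
      funext k; fin_cases k <;> simp [projL, hW, hVR] <;> push_cast <;> ring
    -- span of projections is everything
    have hspan3 : Submodule.span ℝ (Set.range VR) = ⊤ := by
      have hcard : Fintype.card (Fin 3) = Module.finrank ℝ (Fin 3 → ℝ) := by
        simp [Module.finrank_pi]
      have hb := (basisOfLinearIndependentOfCardEqFinrank hli hcard).span_eq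
      rwa [coe_basisOfLinearIndependentOfCardEqFinrank hli hcard] at hb
    have hspan2 : Submodule.span ℝ (Set.range (projL ∘ VR)) = ⊤ := by
      rw [Set.range_comp, ← Submodule.map_span, hspan3, Submodule.map_top,
        LinearMap.range_eq_top.mpr projL_surj]
    obtain ⟨s, hs_sub, hs_span, hs_li⟩ :=
      exists_linearIndependent ℝ (Set.range (projL ∘ VR))
    rw [hspan2] at hs_span
    -- s has two distinct elements
    have h2 : ∃ x ∈ s, ∃ y ∈ s, x ≠ y := by
      by_contra hcon
      push_neg at hcon
      have hsub : s.Subsingleton := by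
        intro x hx y hy
        by_contra hne
        exact hne (hcon x hx y hy)
      rcases hsub.eq_empty_or_singleton with he | ⟨x, he⟩
      · rw [he] at hs_span
        simp at hs_span
      · rw [he] at hs_span
        have hle : Module.finrank ℝ (Submodule.span ℝ ({x} : Set (Fin 2 → ℝ))) ≤ 1 := by
          have := finrank_span_le_card (R := ℝ) ({x} : Set (Fin 2 → ℝ))
          simpa using this
        rw [hs_span] at hle
        rw [finrank_top ℝ (Fin 2 → ℝ)] at hle
        simp [Module.finrank_pi] at hle
    obtain ⟨x, hx, y, hy, hxy⟩ := h2
    obtain ⟨i, hi⟩ := hs_sub hx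
    obtain ⟨j, hj⟩ := hs_sub hy
    -- candidate periods for a
    refine ⟨![W i, W j], ?_, ?_⟩
    · intro k
      have key : ∀ m : Fin 3, (fun l => ((W m l : ℤ) : ℝ)) ∈ s → IsPeriodOf a (W m) := by
        intro m hm
        constructor
        · intro h0
          have : (fun l => ((W m l : ℤ) : ℝ)) = 0 := by
            funext l; rw [h0]; simp
          exact hs_li.ne_zero ⟨_, hm⟩ this
        · intro w; exact hper m w
      fin_cases k
      · exact key i (by rw [Function.comp_apply, hWVR i] at hi; rw [hi]; exact hx)
      · exact key j (by rw [Function.comp_apply, hWVR j] at hj; rw [hj]; exact hy)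
    · -- linear independence of the pair
      have hxv : x = fun l => ((W i l : ℤ) : ℝ) := by
        rw [← hi, Function.comp_apply, hWVR i]
      have hyv : y = fun l => ((W j l : ℤ) : ℝ) := by
        rw [← hj, Function.comp_apply, hWVR j]
      have g : Fin 2 → s := ![⟨x, hx⟩, ⟨y, hy⟩]
      have ginj : Function.Injective (![⟨x, hx⟩, ⟨y, hy⟩] : Fin 2 → s) := by
        intro p q hpq
        fin_cases p <;> fin_cases q <;> simp_all <;>
          exact absurd (congrArg Subtype.val hpq) (by simpa using hxy)
      have hli2 := hs_li.comp _ ginj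
      have heq : (Subtype.val ∘ (![⟨x, hx⟩, ⟨y, hy⟩] : Fin 2 → s)) =
          (fun k l => (((![W i, W j] : Fin 2 → Cell 2) k l : ℤ) : ℝ)) := by
        funext k
        fin_cases k
        · simpa using hxv
        · simpa using hyv
      rwa [heq] at hli2
end
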